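/- Let n ≥ 1, m ∈ ℝ, r ≥ 0, and let p : ℤⁿ → ℂ be a symbol of order m. Then p(D) is GS-r if and only if there exists a single fixed k ∈ ℝ such that for every f ∈ H^k(𝕋ⁿ) with f(ξ) = 0 whenever p(ξ) = 0, there exists u ∈ H^{k+m−r}(𝕋ⁿ) with p(ξ)u(ξ) = f(ξ) for all ξ ∈ ℤⁿ. -/

import Mathlib

open scoped BigOperators

/-- `|ξ| = Σⱼ |ξⱼ|`. -/
noncomputable def l1norm {n : ℕ} (ξ : Fin n → ℤ) : ℝ := ∑ j, |(ξ j : ℝ)|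

/-- `‖ξ‖² = Σⱼ ξⱼ²`. -/
noncomputable def l2normSq {n : ℕ} (ξ : Fin n → ℤ) : ℝ := ∑ j, ((ξ j : ℝ)) ^ 2

/-- `u ∈ H^k(𝕋ⁿ)` in terms of its Fourier coefficients. -/
def InSobolev {n : ℕ} (k : ℝ) (u : (Fin n → ℤ) → ℂ) : Prop :=
  Summable fun ξ : Fin n → ℤ => (1 + l2normSq ξ) ^ k * ‖u ξ‖ ^ 2

/-- Polynomial growth of Fourier coefficients (a distribution on `𝕋ⁿ`). -/
def PolyGrowth {n : ℕ} (u : (Fin n → ℤ) → ℂ) : Prop :=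
  ∃ C N : ℝ, 0 < C ∧ 0 < N ∧
    ∀ ξ, ‖u ξ‖ ≤ C * (1 + Real.sqrt (l2normSq ξ)) ^ N

/-- Rapidly decreasing Fourier coefficients (a smooth function on `𝕋ⁿ`). -/
def RapidDecay {n : ℕ} (v : (Fin n → ℤ) → ℂ) : Prop :=
  ∀ N : ℝ, 0 < N → ∃ C : ℝ, 0 < C ∧
    ∀ ξ, ‖v ξ‖ ≤ C * (1 + Real.sqrt (l2normSq ξ)) ^ (-N)

/-- `p` is a symbol of order `m`. -/
def SymbolOrder {n : ℕ} (m : ℝ) (p : (Fin n → ℤ) → ℂ) : Prop :=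
  ∃ C : ℝ, 0 < C ∧ ∀ ξ, ‖p ξ‖ ≤ C * (1 + l2normSq ξ) ^ (m / 2)

/-- `p(D)` is globally hypoelliptic with loss of `r` derivatives (GH-`r`). -/
def GHr {n : ℕ} (m r : ℝ) (p : (Fin n → ℤ) → ℂ) : Prop :=
  ∀ (k : ℝ) (u : (Fin n → ℤ) → ℂ), PolyGrowth u →
    InSobolev k (fun ξ => p ξ * u ξ) → InSobolev (k + m - r) u

/-- `p(D)` is globally solvable with loss of `r` derivatives (GS-`r`). -/
def GSr {n : ℕ} (m r : ℝ) (p : (Fin n → ℤ) → ℂ) : Prop :=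
  ∀ (k : ℝ) (f : (Fin n → ℤ) → ℂ), InSobolev k f → (∀ ξ, p ξ = 0 → f ξ = 0) →
    ∃ u : (Fin n → ℤ) → ℂ, InSobolev (k + m - r) u ∧ ∀ ξ, p ξ * u ξ = f ξ

/-- `p(D)` is globally hypoelliptic (GH). -/
def GloballyHypoelliptic {n : ℕ} (p : (Fin n → ℤ) → ℂ) : Prop :=
  ∀ u : (Fin n → ℤ) → ℂ, PolyGrowth u →
    RapidDecay (fun ξ => p ξ * u ξ) → RapidDecay u

lemma one_add_l2_pos {n : ℕ} (ξ : Fin n → ℤ) : 0 < 1 + l2normSq ξ := by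
  have : 0 ≤ l2normSq ξ := Finset.sum_nonneg fun j _ => sq_nonneg _
  linarith

lemma sobolev_shift {n : ℕ} (k k' : ℝ) (f : (Fin n → ℤ) → ℂ) (hf : InSobolev k f) :
    InSobolev k' (fun ξ => (((1 + l2normSq ξ) ^ ((k - k') / 2) : ℝ) : ℂ) * f ξ) := by
  unfold InSobolev at hf ⊢
  refine (summable_congr ?_).mpr hf
  intro ξ
  have hw := one_add_l2_pos ξ
  have hnn : (0:ℝ) ≤ (1 + l2normSq ξ) ^ ((k - k') / 2) := Real.rpow_nonneg hw.le _
  rw [norm_mul, Complex.norm_real, Real.norm_eq_abs, abs_of_nonneg hnn, mul_pow,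
    ← Real.rpow_natCast ((1 + l2normSq ξ) ^ ((k - k') / 2)) 2,
    ← Real.rpow_mul hw.le]
  rw [show (k - k') / 2 * (2:ℕ) = k - k' by push_cast; ring]
  rw [← mul_assoc, ← Real.rpow_add hw]
  ring_nf

theorem stmt_11 {n : ℕ} (hn : 1 ≤ n) (m r : ℝ) (hr : 0 ≤ r)
    (p : (Fin n → ℤ) → ℂ) (hp : SymbolOrder m p) :
    GSr m r p ↔
      ∃ k : ℝ, ∀ f : (Fin n → ℤ) → ℂ, InSobolev k f →
        (∀ ξ, p ξ = 0 → f ξ = 0) →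
        ∃ u : (Fin n → ℤ) → ℂ, InSobolev (k + m - r) u ∧ ∀ ξ, p ξ * u ξ = f ξ := by
  constructor
  · intro h
    exact ⟨0, fun f hf hv => h 0 f hf hv⟩
  · rintro ⟨k₀, hk₀⟩ k f hf hv
    set g : (Fin n → ℤ) → ℂ :=
      fun ξ => (((1 + l2normSq ξ) ^ ((k - k₀) / 2) : ℝ) : ℂ) * f ξ with hgdef
    have hg : InSobolev k₀ g := sobolev_shift k k₀ f hf
    have hgv : ∀ ξ, p ξ = 0 → g ξ = 0 := by
      intro ξ h; simp [hgdef, hv ξ h]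
    obtain ⟨u', hu', hpu'⟩ := hk₀ g hg hgv
    refine ⟨fun ξ => (((1 + l2normSq ξ) ^ ((k₀ - k) / 2) : ℝ) : ℂ) * u' ξ, ?_, ?_⟩
    · have h2 := sobolev_shift (k₀ + m - r) (k + m - r) u' hu'
      have : (k₀ + m - r - (k + m - r)) / 2 = (k₀ - k) / 2 := by ring
      rwa [this] at h2
    · intro ξ
      have hw := one_add_l2_pos ξ
      have := hpu' ξ
      calc p ξ * ((((1 + l2normSq ξ) ^ ((k₀ - k) / 2) : ℝ) : ℂ) * u' ξ)
          = (((1 + l2normSq ξ) ^ ((k₀ - k) / 2) : ℝ) : ℂ) * (p ξ * u' ξ) := by ring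
        _ = (((1 + l2normSq ξ) ^ ((k₀ - k) / 2) : ℝ) : ℂ) *
              ((((1 + l2normSq ξ) ^ ((k - k₀) / 2) : ℝ) : ℂ) * f ξ) := by rw [this]
        _ = f ξ := by
              rw [← mul_assoc, ← Complex.ofReal_mul, ← Real.rpow_add hw]
              rw [show (k₀ - k) / 2 + (k - k₀) / 2 = 0 by ring, Real.rpow_zero]
              simp
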